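/- Let A be a nonnegative n×n matrix with max-times spectral radius λ > 0, and let δ = 1^T (λ^{-1}A)* 1 (the maximal entry of the Kleene star of λ^{-1}A). Then the minimum of the Hilbert-seminorm ratio (max_i x_i)(max_j 1/x_j) over all vectors x of the form x = (λ^{-1}A)* u with u positive equals δ, and the minimizers are exactly x = (δ^{-1} 1 1^T ⊕ λ^{-1}A)* u for positive u. -/

import Mathlib

open scoped BigOperators

noncomputable def mtMulMat {n : ℕ} (A B : Matrix (Fin n) (Fin n) ℝ) :
    Matrix (Fin n) (Fin n) ℝ :=
  fun i j => ⨆ k, A i k * B k j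

noncomputable def mtMulVec {n : ℕ} (A : Matrix (Fin n) (Fin n) ℝ) (x : Fin n → ℝ) :
    Fin n → ℝ :=
  fun i => ⨆ j, A i j * x j

noncomputable def mtPow {n : ℕ} (A : Matrix (Fin n) (Fin n) ℝ) : ℕ → Matrix (Fin n) (Fin n) ℝ
  | 0 => fun i j => if i = j then 1 else 0
  | m + 1 => mtMulMat (mtPow A m) A

noncomputable def mtTrace {n : ℕ} (A : Matrix (Fin n) (Fin n) ℝ) : ℝ := ⨆ i, A i i

noncomputable def mtTr {n : ℕ} (A : Matrix (Fin n) (Fin n) ℝ) : ℝ :=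
  ⨆ m : Fin n, mtTrace (mtPow A (m.1 + 1))

noncomputable def kleeneStar {n : ℕ} (A : Matrix (Fin n) (Fin n) ℝ) :
    Matrix (Fin n) (Fin n) ℝ :=
  fun i j => ⨆ m : Fin n, mtPow A m.1 i j

noncomputable def cycleMean {n : ℕ} (A : Matrix (Fin n) (Fin n) ℝ) (c : List (Fin n)) : ℝ :=
  (((c.zip (c.rotate 1)).map (fun p => A p.1 p.2)).prod) ^ ((1 : ℝ) / c.length)

noncomputable def specRad {n : ℕ} (A : Matrix (Fin n) (Fin n) ℝ) : ℝ :=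
  sSup {r : ℝ | ∃ c : List (Fin n), c ≠ [] ∧ c.length ≤ n ∧ r = cycleMean A c}

section helpers
variable {n : ℕ}

lemma le_fsup (f : Fin n → ℝ) (i : Fin n) : f i ≤ ⨆ j, f j :=
  le_ciSup (Set.Finite.bddAbove (Set.finite_range f)) i

lemma fsup_le (hn : 0 < n) {f : Fin n → ℝ} {a : ℝ} (h : ∀ i, f i ≤ a) : (⨆ i, f i) ≤ a := by
  haveI : Nonempty (Fin n) := ⟨⟨0, hn⟩⟩
  exact ciSup_le h

lemma exists_fsup (hn : 0 < n) (f : Fin n → ℝ) : ∃ i, (⨆ j, f j) = f i ∧ ∀ j, f j ≤ f i := by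
  haveI : Nonempty (Fin n) := ⟨⟨0, hn⟩⟩
  obtain ⟨i, hi⟩ := Finite.exists_max f
  exact ⟨i, le_antisymm (ciSup_le hi) (le_fsup f i), hi⟩

lemma mul_fsup (hn : 0 < n) (c : ℝ) (hc : 0 ≤ c) (f : Fin n → ℝ) :
    c * (⨆ i, f i) = ⨆ i, c * f i := by
  obtain ⟨i, hi, hmax⟩ := exists_fsup hn f
  rw [hi]
  exact le_antisymm (le_fsup (fun j => c * f j) i)
    (fsup_le hn fun j => mul_le_mul_of_nonneg_left (hmax j) hc)

lemma fsup_mul (hn : 0 < n) (c : ℝ) (hc : 0 ≤ c) (f : Fin n → ℝ) :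
    (⨆ i, f i) * c = ⨆ i, f i * c := by
  simp only [mul_comm _ c]; exact mul_fsup hn c hc f

lemma fsup_comm (hn : 0 < n) (f : Fin n → Fin n → ℝ) :
    (⨆ i, ⨆ j, f i j) = ⨆ j, ⨆ i, f i j := by
  apply le_antisymm
  · exact fsup_le hn fun i => fsup_le hn fun j =>
      le_trans (le_fsup (fun i' => f i' j) i) (le_fsup (fun j' => ⨆ i', f i' j') j)
  · exact fsup_le hn fun j => fsup_le hn fun i =>
      le_trans (le_fsup (fun j' => f i j') j) (le_fsup (fun i' => ⨆ j', f i' j') i)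

lemma mtPow_nonneg {C : Matrix (Fin n) (Fin n) ℝ} (hC : ∀ i j, 0 ≤ C i j) (m : ℕ)
    (i j : Fin n) : 0 ≤ mtPow C m i j := by
  induction m generalizing i j with
  | zero => simp only [mtPow]; split <;> norm_num
  | succ m ih =>
    calc (0:ℝ) ≤ mtPow C m i i * C i j := mul_nonneg (ih i i) (hC i j)
    _ ≤ _ := le_fsup (fun k => mtPow C m i k * C k j) i

lemma mtPow_one (hn : 0 < n) {C : Matrix (Fin n) (Fin n) ℝ} (hC : ∀ i j, 0 ≤ C i j)
    (i j : Fin n) : mtPow C 1 i j = C i j := by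
  apply le_antisymm
  · refine fsup_le hn fun k => ?_
    show (if i = k then (1:ℝ) else 0) * C k j ≤ C i j
    split
    · next h => subst h; simp
    · simpa using hC i j
  · simp only [mtPow, mtMulMat]
    calc C i j = (if i = i then (1:ℝ) else 0) * C i j := by simp
    _ ≤ _ := le_fsup (fun k => (if i = k then (1:ℝ) else 0) * C k j) i

lemma mtMulVec_mono (hn : 0 < n) {C : Matrix (Fin n) (Fin n) ℝ} (hC : ∀ i j, 0 ≤ C i j)
    {y z : Fin n → ℝ} (h : ∀ j, y j ≤ z j) (i : Fin n) : mtMulVec C y i ≤ mtMulVec C z i :=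
  fsup_le hn fun j => le_trans (mul_le_mul_of_nonneg_left (h j) (hC i j))
    (le_fsup (fun j' => C i j' * z j') j)

lemma mtMulVec_assoc (hn : 0 < n) {P Q : Matrix (Fin n) (Fin n) ℝ}
    (hP : ∀ i j, 0 ≤ P i j) {u : Fin n → ℝ} (hu : ∀ j, 0 ≤ u j) (i : Fin n) :
    mtMulVec (mtMulMat P Q) u i = mtMulVec P (mtMulVec Q u) i := by
  show (⨆ j, (⨆ k, P i k * Q k j) * u j) = ⨆ k, P i k * ⨆ j, Q k j * u j
  have h1 : ∀ j, (⨆ k, P i k * Q k j) * u j = ⨆ k, P i k * Q k j * u j := fun j =>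
    fsup_mul hn (u j) (hu j) _
  have h2 : ∀ k, P i k * (⨆ j, Q k j * u j) = ⨆ j, P i k * (Q k j * u j) := fun k =>
    mul_fsup hn _ (hP i k) _
  simp only [h1, h2]
  rw [fsup_comm hn (fun j k => P i k * Q k j * u j)]
  simp only [mul_assoc]

lemma exists_path (hn : 0 < n) {C : Matrix (Fin n) (Fin n) ℝ} (hC : ∀ i j, 0 ≤ C i j) :
    ∀ m, 1 ≤ m → ∀ i j : Fin n, ∃ v : ℕ → Fin n, v 0 = i ∧ v m = j ∧
      mtPow C m i j = ∏ k ∈ Finset.range m, C (v k) (v (k+1)) := by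
  intro m hm
  induction m, hm using Nat.le_induction with
  | base =>
    intro i j
    refine ⟨fun t => if t = 0 then i else j, by simp, by simp, ?_⟩
    rw [mtPow_one hn hC]
    simp
  | succ m hm ih =>
    intro i j
    obtain ⟨k0, hk0, _⟩ := exists_fsup hn (fun k => mtPow C m i k * C k j)
    obtain ⟨v, hv0, hvm, hvp⟩ := ih i k0
    refine ⟨fun t => if t ≤ m then v t else j, by simp [hv0], by simp, ?_⟩
    have hstep : mtPow C (m+1) i j = mtPow C m i k0 * C k0 j := by
      show (⨆ k, mtPow C m i k * C k j) = _
      exact hk0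
    rw [hstep, Finset.prod_range_succ]
    beta_reduce
    have hlast : (if m ≤ m then v m else j) = k0 := by simp [hvm]
    have hlast2 : (if m + 1 ≤ m then v (m+1) else j) = j := by simp
    rw [hlast, hlast2, hvp]
    congr 1
    apply Finset.prod_congr rfl
    intro k hk
    have hk' := Finset.mem_range.mp hk
    have e1 : (if k ≤ m then v k else j) = v k := by simp [Nat.le_of_lt hk']
    have e2 : (if k + 1 ≤ m then v (k+1) else j) = v (k+1) := by simp [Nat.succ_le_of_lt hk']
    rw [e1, e2]

lemma path_le (hn : 0 < n) {C : Matrix (Fin n) (Fin n) ℝ} (hC : ∀ i j, 0 ≤ C i j) :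
    ∀ m (v : ℕ → Fin n),
      (∏ k ∈ Finset.range m, C (v k) (v (k+1))) ≤ mtPow C m (v 0) (v m) := by
  intro m
  induction m with
  | zero => intro v; simp [mtPow]
  | succ m ih =>
    intro v
    rw [Finset.prod_range_succ]
    calc (∏ k ∈ Finset.range m, C (v k) (v (k+1))) * C (v m) (v (m+1))
        ≤ mtPow C m (v 0) (v m) * C (v m) (v (m+1)) :=
          mul_le_mul_of_nonneg_right (ih v) (hC _ _)
    _ ≤ _ := le_fsup (fun k => mtPow C m (v 0) k * C k (v (m+1))) (v m)

lemma mtPow_mul_le (hn : 0 < n) {C : Matrix (Fin n) (Fin n) ℝ} (hC : ∀ i j, 0 ≤ C i j) :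
    ∀ b a (i k j : Fin n), mtPow C a i k * mtPow C b k j ≤ mtPow C (a+b) i j := by
  intro b
  induction b with
  | zero =>
    intro a i k j
    show mtPow C a i k * (if k = j then (1:ℝ) else 0) ≤ mtPow C a i j
    split
    · next h => subst h; simp
    · simpa using mtPow_nonneg hC a i j
  | succ b ih =>
    intro a i k j
    obtain ⟨l, hl, _⟩ := exists_fsup hn (fun l => mtPow C b k l * C l j)
    show mtPow C a i k * (⨆ l, mtPow C b k l * C l j) ≤ ⨆ l, mtPow C (a+b) i l * C l j
    rw [hl]
    calc mtPow C a i k * (mtPow C b k l * C l j)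
        = (mtPow C a i k * mtPow C b k l) * C l j := by ring
      _ ≤ mtPow C (a+b) i l * C l j := mul_le_mul_of_nonneg_right (ih a i k l) (hC l j)
      _ ≤ _ := le_fsup (fun l' => mtPow C (a+b) i l' * C l' j) l

lemma mtPow_le_star (hn : 0 < n) {C : Matrix (Fin n) (Fin n) ℝ} (hC : ∀ i j, 0 ≤ C i j)
    (hcyc : ∀ (L : ℕ) (v : ℕ → Fin n), 1 ≤ L → L ≤ n → v L = v 0 →
      (∏ k ∈ Finset.range L, C (v k) (v (k+1))) ≤ 1) :
    ∀ m (i j : Fin n), mtPow C m i j ≤ kleeneStar C i j := by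
  intro m
  induction m using Nat.strong_induction_on with
  | _ m ih =>
  intro i j
  by_cases hm : m < n
  · exact le_fsup (fun m' : Fin n => mtPow C m'.1 i j) ⟨m, hm⟩
  push_neg at hm
  have hm1 : 1 ≤ m := le_trans hn hm
  obtain ⟨v, hv0, hvm, hvp⟩ := exists_path hn hC m hm1 i j
  obtain ⟨s, t, hst, hvst⟩ := Fintype.exists_ne_map_eq_of_card_lt
    (fun k : Fin (n+1) => v k.1) (by simp)
  obtain ⟨a, b, hab, hbn, hvab⟩ : ∃ a b : ℕ, a < b ∧ b ≤ n ∧ v a = v b := by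
    rcases lt_or_gt_of_ne hst with h | h
    · exact ⟨s.1, t.1, h, Nat.lt_succ_iff.mp t.2, hvst⟩
    · exact ⟨t.1, s.1, h, Nat.lt_succ_iff.mp s.2, hvst.symm⟩
  set L := b - a with hL
  have hb : a + L = b := by omega
  have hL1 : 1 ≤ L := by omega
  have hLn : L ≤ n := by omega
  have hLm : L ≤ m := le_trans hLn hm
  set f : ℕ → ℝ := fun k => C (v k) (v (k+1)) with hf
  have hfnn : ∀ k, 0 ≤ f k := fun k => hC _ _
  set w : ℕ → Fin n := fun k => if k < a then v k else v (k + L) with hw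
  set g : ℕ → ℝ := fun k => C (w k) (w (k+1)) with hg
  -- split the product
  have hsplit : (∏ k ∈ Finset.range m, f k) =
      ((∏ k ∈ Finset.range a, f k) * (∏ k ∈ Finset.Ico a b, f k)) *
        (∏ k ∈ Finset.Ico b m, f k) := by
    rw [Finset.range_eq_Ico, ← Finset.prod_Ico_consecutive f (Nat.zero_le b) (le_trans hbn hm),
      ← Finset.prod_Ico_consecutive f (Nat.zero_le a) (le_of_lt hab), ← Finset.range_eq_Ico]
  have hcycle : (∏ k ∈ Finset.Ico a b, f k) ≤ 1 := by
    rw [Finset.prod_Ico_eq_prod_range]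
    have : ∀ t, f (a + t) = C (v (a + t)) (v (a + t + 1)) := fun t => rfl
    have hv' : (fun t => v (a + t)) L = (fun t => v (a + t)) 0 := by
      simp only [hb, Nat.add_zero]; exact hvab.symm
    have := hcyc L (fun t => v (a + t)) hL1 hLn hv'
    exact this
  have hcycnn : (0:ℝ) ≤ ∏ k ∈ Finset.Ico a b, f k := Finset.prod_nonneg fun k _ => hfnn k
  have hsplit2 : (∏ k ∈ Finset.range (m - L), g k) =
      (∏ k ∈ Finset.range a, f k) * (∏ k ∈ Finset.Ico b m, f k) := by
    have ham : a ≤ m - L := by omega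
    rw [Finset.range_eq_Ico, ← Finset.prod_Ico_consecutive g (Nat.zero_le a) ham,
      ← Finset.range_eq_Ico]
    congr 1
    · apply Finset.prod_congr rfl
      intro k hk
      have hk' := Finset.mem_range.mp hk
      simp only [hg, hw]
      have e1 : (if k < a then v k else v (k + L)) = v k := by simp [hk']
      have e2 : (if k + 1 < a then v (k+1) else v (k + 1 + L)) = v (k+1) := by
        rcases Nat.lt_or_ge (k+1) a with h | h
        · simp [h]
        · have : k + 1 = a := by omega
          simp [this, hb, Nat.lt_irrefl, ← hvab]
      rw [e1, e2]
    · rw [Finset.prod_Ico_eq_prod_range, Finset.prod_Ico_eq_prod_range]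
      have hcard : m - L - a = m - b := by omega
      rw [hcard]
      apply Finset.prod_congr rfl
      intro k hk
      simp only [hg, hw, hf]
      have h1 : ¬ (a + k < a) := by omega
      have h2 : ¬ (a + k + 1 < a) := by omega
      have h3 : a + k + L = b + k := by omega
      have h4 : a + k + 1 + L = b + k + 1 := by omega
      simp only [h1, h2, if_false, h3, h4]
  have hww0 : w 0 = i := by
    by_cases ha : 0 < a
    · simp only [hw]; rw [if_pos ha]; exact hv0
    · have ha0 : a = 0 := by omega
      simp only [hw, ha0, Nat.lt_irrefl, if_false, Nat.zero_add]
      rw [show L = b by omega, ← hvab, ha0]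
      exact hv0
  have hwwm : w (m - L) = j := by
    have h1 : ¬ (m - L < a) := by omega
    have h2 : m - L + L = m := by omega
    simp only [hw, h1, if_false, h2]
    exact hvm
  calc mtPow C m i j = ((∏ k ∈ Finset.range a, f k) * (∏ k ∈ Finset.Ico a b, f k)) *
        (∏ k ∈ Finset.Ico b m, f k) := by rw [hvp]; exact hsplit
    _ = ((∏ k ∈ Finset.range a, f k) * (∏ k ∈ Finset.Ico b m, f k)) *
        (∏ k ∈ Finset.Ico a b, f k) := by ring
    _ ≤ ((∏ k ∈ Finset.range a, f k) * (∏ k ∈ Finset.Ico b m, f k)) * 1 := by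
        apply mul_le_mul_of_nonneg_left hcycle
        exact mul_nonneg (Finset.prod_nonneg fun k _ => hfnn k)
          (Finset.prod_nonneg fun k _ => hfnn k)
    _ = ∏ k ∈ Finset.range (m - L), g k := by rw [mul_one, hsplit2]
    _ ≤ mtPow C (m - L) (w 0) (w (m - L)) := path_le hn hC (m - L) w
    _ = mtPow C (m - L) i j := by rw [hww0, hwwm]
    _ ≤ kleeneStar C i j := ih (m - L) (by omega) i j

lemma star_mul_star_le (hn : 0 < n) {C : Matrix (Fin n) (Fin n) ℝ} (hC : ∀ i j, 0 ≤ C i j)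
    (hstar : ∀ m (i j : Fin n), mtPow C m i j ≤ kleeneStar C i j) (i k j : Fin n) :
    kleeneStar C i k * kleeneStar C k j ≤ kleeneStar C i j := by
  obtain ⟨a, ha, _⟩ := exists_fsup hn (fun m : Fin n => mtPow C m.1 i k)
  obtain ⟨b, hb, _⟩ := exists_fsup hn (fun m : Fin n => mtPow C m.1 k j)
  have e1 : kleeneStar C i k = mtPow C a.1 i k := ha
  have e2 : kleeneStar C k j = mtPow C b.1 k j := hb
  rw [e1, e2]
  exact le_trans (mtPow_mul_le hn hC b.1 a.1 i k j) (hstar (a.1 + b.1) i j)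

lemma cyc_of_subinvariant (hn : 0 < n) {C : Matrix (Fin n) (Fin n) ℝ} (hC : ∀ i j, 0 ≤ C i j)
    {y : Fin n → ℝ} (hy : ∀ i, 0 < y i) (hsub : ∀ i j, C i j * y j ≤ y i) :
    ∀ (L : ℕ) (v : ℕ → Fin n), 1 ≤ L → L ≤ n → v L = v 0 →
      (∏ k ∈ Finset.range L, C (v k) (v (k+1))) ≤ 1 := by
  have key : ∀ (L : ℕ) (v : ℕ → Fin n),
      (∏ k ∈ Finset.range L, C (v k) (v (k+1))) ≤ y (v 0) * (y (v L))⁻¹ := by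
    intro L
    induction L with
    | zero => intro v; simp [mul_inv_cancel₀ (hy (v 0)).ne']
    | succ L ih =>
      intro v
      rw [Finset.prod_range_succ]
      have hedge : C (v L) (v (L+1)) ≤ y (v L) * (y (v (L+1)))⁻¹ := by
        rw [← div_eq_mul_inv, le_div_iff₀ (hy (v (L+1)))]
        exact hsub _ _
      calc (∏ k ∈ Finset.range L, C (v k) (v (k+1))) * C (v L) (v (L+1))
          ≤ (y (v 0) * (y (v L))⁻¹) * (y (v L) * (y (v (L+1)))⁻¹) := by
            apply mul_le_mul (ih v) hedge (hC _ _)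
            exact mul_nonneg (hy (v 0)).le (inv_nonneg.mpr (hy (v L)).le)
        _ = y (v 0) * (y (v (L+1)))⁻¹ := by
            rw [show (y (v 0) * (y (v L))⁻¹) * (y (v L) * (y (v (L+1)))⁻¹)
              = (y (v 0) * (y (v (L+1)))⁻¹) * ((y (v L))⁻¹ * y (v L)) from by ring,
              inv_mul_cancel₀ (hy (v L)).ne', mul_one]
  intro L v hL1 hLn hvL
  calc (∏ k ∈ Finset.range L, C (v k) (v (k+1))) ≤ y (v 0) * (y (v L))⁻¹ := key L v
    _ = 1 := by rw [hvL, mul_inv_cancel₀ (hy (v 0)).ne']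

lemma cycle_prod_le (hn : 0 < n) (A : Matrix (Fin n) (Fin n) ℝ) (hA : ∀ i j, 0 ≤ A i j)
    (hlam : 0 < specRad A) (L : ℕ) (v : ℕ → Fin n) (hL1 : 1 ≤ L) (hLn : L ≤ n)
    (hvL : v L = v 0) :
    (∏ k ∈ Finset.range L, (specRad A)⁻¹ * A (v k) (v (k+1))) ≤ 1 := by
  set lam := specRad A with hlamdef
  set P := ∏ k ∈ Finset.range L, A (v k) (v (k+1)) with hPdef
  have hP : (0:ℝ) ≤ P := Finset.prod_nonneg fun k _ => hA _ _
  set c : List (Fin n) := List.ofFn (fun t : Fin L => v t.1) with hc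
  have hclen : c.length = L := by simp [hc]
  have hcne : c ≠ [] := by
    intro h
    rw [h] at hclen
    simp at hclen
    omega
  have hzip : (c.zip (c.rotate 1)).map (fun p => A p.1 p.2)
      = List.ofFn (fun t : Fin L => A (v t.1) (v (t.1+1))) := by
    apply List.ext_getElem
    · simp [hclen]
    · intro k h1 h2
      have hk : k < L := by simpa using h2
      have hrot : k < (c.rotate 1).length := by simpa [hclen] using hk
      have hget := List.get_rotate c 1 ⟨k, hrot⟩
      simp only [List.get_eq_getElem] at hget
      simp only [List.getElem_map, List.getElem_zip, List.getElem_ofFn, hget]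
      simp only [hc, List.getElem_ofFn, hclen, List.length_ofFn]
      show A (v k) (v ((k+1) % L)) = A (v k) (v (k+1))
      rcases Nat.lt_or_ge (k+1) L with h | h
      · rw [Nat.mod_eq_of_lt h]
      · have hkL : k + 1 = L := by omega
        rw [hkL, Nat.mod_self, ← hkL]
        rw [← hkL] at hvL
        rw [hvL]
  have hprod : ((c.zip (c.rotate 1)).map (fun p => A p.1 p.2)).prod = P := by
    rw [hzip, List.prod_ofFn, hPdef]
    exact Fin.prod_univ_eq_prod_range (fun k => A (v k) (v (k+1))) L
  have hmem : cycleMean A c ∈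
      {r : ℝ | ∃ c' : List (Fin n), c' ≠ [] ∧ c'.length ≤ n ∧ r = cycleMean A c'} :=
    ⟨c, hcne, by rw [hclen]; exact hLn, rfl⟩
  have hbdd : BddAbove {r : ℝ | ∃ c' : List (Fin n), c' ≠ [] ∧ c'.length ≤ n ∧
      r = cycleMean A c'} := by
    have hfin : {r : ℝ | ∃ c' : List (Fin n), c' ≠ [] ∧ c'.length ≤ n ∧
        r = cycleMean A c'}.Finite := by
      apply Set.Finite.subset (Set.Finite.image (cycleMean A) (List.finite_length_le (Fin n) n))
      rintro r ⟨c', -, hlen, rfl⟩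
      exact ⟨c', hlen, rfl⟩
    exact hfin.bddAbove
  have hle : cycleMean A c ≤ lam := le_csSup hbdd hmem
  rw [cycleMean, hprod, hclen] at hle
  have hLne : (L:ℝ) ≠ 0 := Nat.cast_ne_zero.mpr (by omega)
  have hPL : P ≤ lam ^ L := by
    have h1 : (P ^ ((1:ℝ)/L)) ^ L ≤ lam ^ L :=
      pow_le_pow_left₀ (Real.rpow_nonneg hP _) hle L
    have h2 : (P ^ ((1:ℝ)/L)) ^ L = P := by
      rw [← Real.rpow_natCast (P ^ ((1:ℝ)/L)) L, ← Real.rpow_mul hP,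
        one_div_mul_cancel hLne, Real.rpow_one]
    rw [h2] at h1
    exact h1
  rw [Finset.prod_mul_distrib, Finset.prod_const, Finset.card_range, ← hPdef]
  calc lam⁻¹ ^ L * P ≤ lam⁻¹ ^ L * lam ^ L := by
        apply mul_le_mul_of_nonneg_left hPL
        exact pow_nonneg (inv_nonneg.mpr hlam.le) L
    _ = 1 := by rw [← mul_pow, inv_mul_cancel₀ hlam.ne', one_pow]

end helpers

set_option maxHeartbeats 1000000 in
theorem stmt14 {n : ℕ} (hn : 0 < n) (A : Matrix (Fin n) (Fin n) ℝ)
    (hA : ∀ i j, 0 ≤ A i j) (hlam : 0 < specRad A)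
    (δ : ℝ) (hδ : δ = ⨆ i, ⨆ j, kleeneStar ((specRad A)⁻¹ • A) i j)
    (M : Matrix (Fin n) (Fin n) ℝ)
    (hM : M = fun i j => max δ⁻¹ ((specRad A)⁻¹ * A i j)) :
    IsLeast {v : ℝ | ∃ u : Fin n → ℝ, (∀ i, 0 < u i) ∧
        v = (⨆ i, mtMulVec (kleeneStar ((specRad A)⁻¹ • A)) u i) *
            (⨆ j, (mtMulVec (kleeneStar ((specRad A)⁻¹ • A)) u j)⁻¹)} δ ∧
      ∀ x : Fin n → ℝ,
        (∃ u : Fin n → ℝ, (∀ i, 0 < u i) ∧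
            x = mtMulVec (kleeneStar ((specRad A)⁻¹ • A)) u) →
          ((⨆ i, x i) * (⨆ j, (x j)⁻¹) = δ ↔
            ∃ u : Fin n → ℝ, (∀ i, 0 < u i) ∧ x = mtMulVec (kleeneStar M) u) := by
  have hi0 : (0:ℕ) < n := hn
  set B : Matrix (Fin n) (Fin n) ℝ := (specRad A)⁻¹ • A with hBdef
  have hBapp : ∀ i j, B i j = (specRad A)⁻¹ * A i j := fun i j => rfl
  have hBnn : ∀ i j, 0 ≤ B i j := fun i j =>
    mul_nonneg (inv_nonneg.mpr hlam.le) (hA i j)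
  set S := kleeneStar B with hSdef
  have hcycB : ∀ (L : ℕ) (v : ℕ → Fin n), 1 ≤ L → L ≤ n → v L = v 0 →
      (∏ k ∈ Finset.range L, B (v k) (v (k+1))) ≤ 1 := by
    intro L v h1 h2 h3
    have := cycle_prod_le hn A hA hlam L v h1 h2 h3
    simpa [hBapp] using this
  have hstarB : ∀ m (i j : Fin n), mtPow B m i j ≤ S i j := mtPow_le_star hn hBnn hcycB
  have hSmul : ∀ i k j : Fin n, S i k * S k j ≤ S i j := star_mul_star_le hn hBnn hstarB
  have hSnn : ∀ i j, 0 ≤ S i j := fun i j =>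
    le_trans (mtPow_nonneg hBnn 0 i j) (le_fsup (fun m : Fin n => mtPow B m.1 i j) ⟨0, hn⟩)
  have hSdiag : ∀ i, 1 ≤ S i i := by
    intro i
    have h := le_fsup (fun m : Fin n => mtPow B m.1 i i) ⟨0, hn⟩
    exact le_trans (by simp [mtPow]) h
  have hSled : ∀ i j, S i j ≤ δ := by
    intro i j
    rw [hδ]
    exact le_trans (le_fsup (fun j' => S i j') j) (le_fsup (fun i' => ⨆ j', S i' j') i)
  have hδ1 : (1:ℝ) ≤ δ := le_trans (hSdiag ⟨0, hn⟩) (hSled ⟨0, hn⟩ ⟨0, hn⟩)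
  have hδpos : (0:ℝ) < δ := lt_of_lt_of_le one_pos hδ1
  obtain ⟨p, hp, -⟩ := exists_fsup hn (fun i => ⨆ j, S i j)
  obtain ⟨q, hq, -⟩ := exists_fsup hn (fun j => S p j)
  have hpq : S p q = δ := by rw [hδ, hp, hq]
  have hSu_pos : ∀ (u : Fin n → ℝ), (∀ i, 0 < u i) → ∀ i, 0 < mtMulVec S u i := by
    intro u hu i
    have h1 : 0 < S i i * u i := mul_pos (lt_of_lt_of_le one_pos (hSdiag i)) (hu i)
    exact lt_of_lt_of_le h1 (le_fsup (fun j => S i j * u j) i)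
  have hSidem : ∀ (u : Fin n → ℝ), (∀ i, 0 < u i) → ∀ i,
      mtMulVec S (mtMulVec S u) i = mtMulVec S u i := by
    intro u hu i
    apply le_antisymm
    · refine fsup_le hn fun k => ?_
      have h : S i k * mtMulVec S u k = ⨆ j, S i k * (S k j * u j) :=
        mul_fsup hn _ (hSnn i k) _
      rw [h]
      refine fsup_le hn fun j => ?_
      calc S i k * (S k j * u j) = (S i k * S k j) * u j := by ring
        _ ≤ S i j * u j := mul_le_mul_of_nonneg_right (hSmul i k j) (hu j).le
        _ ≤ _ := le_fsup (fun j' => S i j' * u j') j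
    · refine fsup_le hn fun j => ?_
      have huj : u j ≤ mtMulVec S u j := by
        calc u j = 1 * u j := (one_mul _).symm
          _ ≤ S j j * u j := mul_le_mul_of_nonneg_right (hSdiag j) (hu j).le
          _ ≤ _ := le_fsup (fun j' => S j j' * u j') j
      calc S i j * u j ≤ S i j * mtMulVec S u j :=
            mul_le_mul_of_nonneg_left huj (hSnn i j)
        _ ≤ _ := le_fsup (fun j' => S i j' * mtMulVec S u j') j
  have hLB : ∀ (u : Fin n → ℝ), (∀ i, 0 < u i) →
      δ ≤ (⨆ i, mtMulVec S u i) * (⨆ j, (mtMulVec S u j)⁻¹) := by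
    intro u hu
    have hxpos : ∀ i, 0 < mtMulVec S u i := hSu_pos u hu
    have hfix : ∀ i, mtMulVec S (mtMulVec S u) i = mtMulVec S u i := hSidem u hu
    have h1 : δ * mtMulVec S u q ≤ mtMulVec S u p := by
      calc δ * mtMulVec S u q = S p q * mtMulVec S u q := by rw [hpq]
        _ ≤ ⨆ j, S p j * mtMulVec S u j := le_fsup (fun j => S p j * mtMulVec S u j) q
        _ = mtMulVec S u p := hfix p
    have h2 : δ ≤ mtMulVec S u p * (mtMulVec S u q)⁻¹ := by
      rw [← div_eq_mul_inv, le_div_iff₀ (hxpos q)]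
      exact h1
    calc δ ≤ mtMulVec S u p * (mtMulVec S u q)⁻¹ := h2
      _ ≤ (⨆ i, mtMulVec S u i) * (⨆ j, (mtMulVec S u j)⁻¹) := by
          apply mul_le_mul (le_fsup (fun i => mtMulVec S u i) p)
            (le_fsup (fun j => (mtMulVec S u j)⁻¹) q)
            (inv_nonneg.mpr (hxpos q).le)
          exact le_trans (hxpos p).le (le_fsup (fun i => mtMulVec S u i) p)
  have hone : ∀ i : Fin n, (0:ℝ) < (fun _ : Fin n => (1:ℝ)) i := fun i => one_pos
  have hy1 : ∀ i, 1 ≤ mtMulVec S (fun _ => (1:ℝ)) i := by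
    intro i
    calc (1:ℝ) ≤ S i i := hSdiag i
      _ = S i i * 1 := (mul_one _).symm
      _ ≤ _ := le_fsup (fun j => S i j * 1) i
  have hyled : ∀ i, mtMulVec S (fun _ => (1:ℝ)) i ≤ δ := fun i => fsup_le hn fun j => by
    rw [mul_one]; exact hSled i j
  have hysup : (⨆ i, mtMulVec S (fun _ => (1:ℝ)) i) = δ := by
    apply le_antisymm (fsup_le hn hyled)
    calc δ = S p q := hpq.symm
      _ = S p q * 1 := (mul_one _).symm
      _ ≤ mtMulVec S (fun _ => (1:ℝ)) p := le_fsup (fun j => S p j * 1) q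
      _ ≤ _ := le_fsup (fun i => mtMulVec S (fun _ => (1:ℝ)) i) p
  have hyinv : (⨆ j, (mtMulVec S (fun _ => (1:ℝ)) j)⁻¹) ≤ 1 := by
    refine fsup_le hn fun j => ?_
    rw [inv_le_one₀ (lt_of_lt_of_le one_pos (hy1 j))]
    exact hy1 j
  have hmemδ : δ = (⨆ i, mtMulVec S (fun _ => (1:ℝ)) i) *
      (⨆ j, (mtMulVec S (fun _ => (1:ℝ)) j)⁻¹) := by
    apply le_antisymm (hLB _ hone)
    calc (⨆ i, mtMulVec S (fun _ => (1:ℝ)) i) * (⨆ j, (mtMulVec S (fun _ => (1:ℝ)) j)⁻¹)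
        ≤ (⨆ i, mtMulVec S (fun _ => (1:ℝ)) i) * 1 :=
          mul_le_mul_of_nonneg_left hyinv (by rw [hysup]; exact hδpos.le)
      _ = δ := by rw [mul_one, hysup]
  have hMapp : ∀ i j, M i j = max δ⁻¹ (B i j) := by intro i j; rw [hM]; exact rfl
  have hMnn : ∀ i j, 0 ≤ M i j := by
    intro i j
    rw [hMapp i j]
    exact le_max_of_le_left (inv_nonneg.mpr hδpos.le)
  have hB1 : ∀ i j, B i j ≤ S i j := by
    intro i j
    rw [← mtPow_one hn hBnn i j]
    exact hstarB 1 i j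
  have hMy : ∀ i j, M i j * mtMulVec S (fun _ => (1:ℝ)) j ≤ mtMulVec S (fun _ => (1:ℝ)) i := by
    intro i j
    have hynn : (0:ℝ) ≤ mtMulVec S (fun _ => (1:ℝ)) j := le_trans zero_le_one (hy1 j)
    rw [hMapp i j, max_mul_of_nonneg _ _ hynn]
    apply max_le
    · calc δ⁻¹ * mtMulVec S (fun _ => (1:ℝ)) j ≤ δ⁻¹ * δ :=
            mul_le_mul_of_nonneg_left (hyled j) (inv_nonneg.mpr hδpos.le)
        _ = 1 := inv_mul_cancel₀ hδpos.ne'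
        _ ≤ _ := hy1 i
    · calc B i j * mtMulVec S (fun _ => (1:ℝ)) j
            ≤ S i j * mtMulVec S (fun _ => (1:ℝ)) j :=
            mul_le_mul_of_nonneg_right (hB1 i j) hynn
        _ ≤ ⨆ j', S i j' * mtMulVec S (fun _ => (1:ℝ)) j' :=
            le_fsup (fun j' => S i j' * mtMulVec S (fun _ => (1:ℝ)) j') j
        _ = _ := hSidem (fun _ => 1) hone i
  have hypos : ∀ i, 0 < mtMulVec S (fun _ => (1:ℝ)) i :=
    fun i => lt_of_lt_of_le one_pos (hy1 i)
  have hcycM := cyc_of_subinvariant hn hMnn hypos hMy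
  have hstarM : ∀ m (i j : Fin n), mtPow M m i j ≤ kleeneStar M i j :=
    mtPow_le_star hn hMnn hcycM
  have hMS_mul : ∀ i k j : Fin n, kleeneStar M i k * kleeneStar M k j ≤ kleeneStar M i j :=
    star_mul_star_le hn hMnn hstarM
  have hM1 : ∀ i j, M i j ≤ kleeneStar M i j := by
    intro i j
    rw [← mtPow_one hn hMnn i j]
    exact hstarM 1 i j
  have hMSnn : ∀ i j, 0 ≤ kleeneStar M i j := fun i j =>
    le_trans (mtPow_nonneg hMnn 0 i j) (le_fsup (fun m : Fin n => mtPow M m.1 i j) ⟨0, hn⟩)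
  have hMSdiag : ∀ i, 1 ≤ kleeneStar M i i := by
    intro i
    have h := le_fsup (fun m : Fin n => mtPow M m.1 i i) ⟨0, hn⟩
    exact le_trans (by simp [mtPow]) h
  constructor
  · exact ⟨⟨fun _ => 1, hone, hmemδ⟩, by rintro v ⟨u, hu, rfl⟩; exact hLB u hu⟩
  · rintro x ⟨u, hu, hxu⟩
    have hxpos : ∀ i, 0 < x i := by rw [hxu]; exact hSu_pos u hu
    have hxfix : ∀ i, mtMulVec S x i = x i := by
      intro i; rw [hxu]; exact hSidem u hu i
    obtain ⟨p₀, hp₀, hp₀max⟩ := exists_fsup hn x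
    obtain ⟨q₀, hq₀, hq₀max⟩ := exists_fsup hn (fun j => (x j)⁻¹)
    have hq₀min : ∀ j, x q₀ ≤ x j := by
      intro j
      exact (inv_le_inv₀ (hxpos j) (hxpos q₀)).mp (hq₀max j)
    constructor
    · intro hratio
      have hpq₀ : x p₀ = δ * x q₀ := by
        have h1 : x p₀ * (x q₀)⁻¹ = δ := by rw [← hp₀, ← hq₀]; exact hratio
        have hne := (hxpos q₀).ne'
        field_simp at h1
        linarith [h1]
      have hMx : ∀ i j, M i j * x j ≤ x i := by
        intro i j
        rw [hMapp i j, max_mul_of_nonneg _ _ (hxpos j).le]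
        apply max_le
        · calc δ⁻¹ * x j ≤ δ⁻¹ * x p₀ :=
                mul_le_mul_of_nonneg_left (hp₀max j) (inv_nonneg.mpr hδpos.le)
            _ = x q₀ := by rw [hpq₀, ← mul_assoc, inv_mul_cancel₀ hδpos.ne', one_mul]
            _ ≤ x i := hq₀min i
        · calc B i j * x j ≤ S i j * x j :=
                mul_le_mul_of_nonneg_right (hB1 i j) (hxpos j).le
            _ ≤ ⨆ j', S i j' * x j' := le_fsup (fun j' => S i j' * x j') j
            _ = x i := hxfix i
      have hpow : ∀ (k : ℕ) (i : Fin n), mtMulVec (mtPow M k) x i ≤ x i := by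
        intro k
        induction k with
        | zero =>
          intro i
          refine fsup_le hn fun j => ?_
          show (if i = j then (1:ℝ) else 0) * x j ≤ x i
          split
          · next h => subst h; simp
          · rw [zero_mul]; exact (hxpos i).le
        | succ k ih =>
          intro i
          have hMxle : ∀ j, mtMulVec M x j ≤ x j := fun j => fsup_le hn fun j' => hMx j j'
          calc mtMulVec (mtPow M (k+1)) x i
              = mtMulVec (mtPow M k) (mtMulVec M x) i := by
                show mtMulVec (mtMulMat (mtPow M k) M) x i = _
                exact mtMulVec_assoc hn (mtPow_nonneg hMnn k) (fun j => (hxpos j).le) i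
            _ ≤ mtMulVec (mtPow M k) x i := mtMulVec_mono hn (mtPow_nonneg hMnn k) hMxle i
            _ ≤ x i := ih i
      refine ⟨x, hxpos, funext fun i => ?_⟩
      apply le_antisymm
      · calc x i = 1 * x i := (one_mul _).symm
          _ ≤ kleeneStar M i i * x i := mul_le_mul_of_nonneg_right (hMSdiag i) (hxpos i).le
          _ ≤ _ := le_fsup (fun j => kleeneStar M i j * x j) i
      · refine fsup_le hn fun j => ?_
        have h : kleeneStar M i j * x j = ⨆ m : Fin n, mtPow M m.1 i j * x j :=
          fsup_mul hn (x j) (hxpos j).le (fun m : Fin n => mtPow M m.1 i j)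
        rw [h]
        refine fsup_le hn fun m => ?_
        calc mtPow M m.1 i j * x j ≤ ⨆ j', mtPow M m.1 i j' * x j' :=
              le_fsup (fun j' => mtPow M m.1 i j' * x j') j
          _ ≤ x i := hpow m.1 i
    · rintro ⟨u', hu', hxu'⟩
      have hge : δ ≤ (⨆ i, x i) * (⨆ j, (x j)⁻¹) := by rw [hxu]; exact hLB u hu
      have hkey : ∀ j, kleeneStar M p₀ j ≤ δ * kleeneStar M q₀ j := by
        intro j
        have h1 : δ⁻¹ * kleeneStar M p₀ j ≤ kleeneStar M q₀ j := by
          calc δ⁻¹ * kleeneStar M p₀ j ≤ M q₀ p₀ * kleeneStar M p₀ j := by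
                apply mul_le_mul_of_nonneg_right _ (hMSnn p₀ j)
                rw [hMapp]
                exact le_max_left _ _
            _ ≤ kleeneStar M q₀ p₀ * kleeneStar M p₀ j :=
                mul_le_mul_of_nonneg_right (hM1 q₀ p₀) (hMSnn p₀ j)
            _ ≤ kleeneStar M q₀ j := hMS_mul q₀ p₀ j
        calc kleeneStar M p₀ j = δ * (δ⁻¹ * kleeneStar M p₀ j) := by
              rw [← mul_assoc, mul_inv_cancel₀ hδpos.ne', one_mul]
          _ ≤ δ * kleeneStar M q₀ j := mul_le_mul_of_nonneg_left h1 hδpos.le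
      have hle : x p₀ ≤ δ * x q₀ := by
        conv_lhs => rw [hxu']
        refine fsup_le hn fun j => ?_
        calc kleeneStar M p₀ j * u' j ≤ (δ * kleeneStar M q₀ j) * u' j :=
              mul_le_mul_of_nonneg_right (hkey j) (hu' j).le
          _ = δ * (kleeneStar M q₀ j * u' j) := by ring
          _ ≤ δ * x q₀ := by
              apply mul_le_mul_of_nonneg_left _ hδpos.le
              rw [hxu']
              exact le_fsup (fun j' => kleeneStar M q₀ j' * u' j') j
      apply le_antisymm _ hge
      rw [hp₀, hq₀]
      calc x p₀ * (x q₀)⁻¹ ≤ (δ * x q₀) * (x q₀)⁻¹ :=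
            mul_le_mul_of_nonneg_right hle (inv_nonneg.mpr (hxpos q₀).le)
        _ = δ := by
            rw [mul_assoc, mul_inv_cancel₀ (hxpos q₀).ne', mul_one]
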